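/- Let Δ ≥ 1 be an integer, let d_1,...,d_Δ be integers with 1 ≤ d_i ≤ Δ, and let λ_0, λ_1,...,λ_Δ be nonnegative reals. Then ∏_{i=1}^Δ (1 + d_i λ_i)^{1/d_i} + λ_0 ≥ (1 + (Δ+1)λ_0)^{1/(Δ+1)} · ∏_{i=1}^Δ (1 + (d_i+1)λ_i)^{1/(d_i+1)}. -/

import Mathlib

open Finset


lemma aux_bern (n : ℕ) {a : ℝ} (ha : 1 ≤ a) : ((n : ℝ) + 1) * a ≤ a ^ (n + 1) + n := by
  have h := one_add_mul_le_pow (by linarith : (-2:ℝ) ≤ a - 1) (n + 1)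
  have e : (1:ℝ) + (a - 1) = a := by ring
  rw [e] at h
  push_cast at h
  linarith

lemma stepG (k : ℕ) (hk : 1 ≤ k) {a : ℝ} (ha : 1 ≤ a) :
    ((((k:ℝ)+1)*a^k - 1)/k)^(k+2) ≤ ((((k:ℝ)+2)*a^(k+1) - 1)/((k:ℝ)+1))^(k+1) := by
  have hk1 : (1:ℝ) ≤ k := by exact_mod_cast hk
  set U : ℝ → ℝ := fun x => ((k:ℝ)+1)*x^k - 1 with hU_def
  set V : ℝ → ℝ := fun x => ((k:ℝ)+2)*x^(k+1) - 1 with hV_def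
  have hUpos : ∀ x : ℝ, 1 ≤ x → 0 < U x := by
    intro x hx
    have : (1:ℝ) ≤ x ^ k := one_le_pow₀ hx
    simp only [hU_def]
    nlinarith
  have hVpos : ∀ x : ℝ, 1 ≤ x → 0 < V x := by
    intro x hx
    have : (1:ℝ) ≤ x ^ (k+1) := one_le_pow₀ hx
    simp only [hV_def]
    nlinarith
  set f : ℝ → ℝ := fun x => ((k:ℝ)+1) * Real.log (V x) - ((k:ℝ)+2) * Real.log (U x) with hf_def
  have hder : ∀ x : ℝ, 1 ≤ x → HasDerivAt f
      (((k:ℝ)+1) * ((((k:ℝ)+2)*(((k:ℝ)+1)*x^k)) / V x)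
        - ((k:ℝ)+2) * ((((k:ℝ)+1)*(((k:ℝ))*x^(k-1))) / U x)) x := by
    intro x hx
    have hVd : HasDerivAt V (((k:ℝ)+2)*(((k:ℝ)+1)*x^k)) x := by
      have := ((hasDerivAt_pow (k+1) x).const_mul ((k:ℝ)+2)).sub_const 1
      simpa [hV_def] using this
    have hUd : HasDerivAt U (((k:ℝ)+1)*(((k:ℝ))*x^(k-1))) x := by
      have := ((hasDerivAt_pow k x).const_mul ((k:ℝ)+1)).sub_const 1
      simpa [hU_def] using this
    exact ((hVd.log (hVpos x hx).ne').const_mul _).sub ((hUd.log (hUpos x hx).ne').const_mul _)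
  have hmono : MonotoneOn f (Set.Ici 1) := by
    apply monotoneOn_of_deriv_nonneg (convex_Ici 1)
    · intro x hx
      exact ((hder x hx).continuousAt).continuousWithinAt
    · intro x hx
      rw [interior_Ici] at hx
      exact ((hder x hx.le).differentiableAt).differentiableWithinAt
    · intro x hx
      rw [interior_Ici] at hx
      rw [(hder x hx.le).deriv]
      have hx1 : 1 ≤ x := hx.le
      have hU' := hUpos x hx1
      have hV' := hVpos x hx1
      have hxk : x ^ k = x ^ (k-1) * x := by
        conv_lhs => rw [show k = (k-1)+1 from (Nat.succ_pred_eq_of_pos hk).symm]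
        rw [pow_succ]
      have hxk1 : x ^ (k+1) = x ^ k * x := pow_succ x k
      have hb := aux_bern k hx1
      have hxm : (0:ℝ) ≤ x ^ (k-1) := by positivity
      rw [sub_nonneg, mul_div_assoc', mul_div_assoc', div_le_div_iff₀ hU' hV']
      have key : (k:ℝ) * V x ≤ ((k:ℝ)+1) * x * U x := by
        simp only [hU_def, hV_def]
        rw [hxk1] at hb ⊢
        nlinarith [hb]
      calc ((k:ℝ)+2) * (((k:ℝ)+1)*(((k:ℝ))*x^(k-1))) * V x
          = (((k:ℝ)+1)*((k:ℝ)+2)*x^(k-1)) * ((k:ℝ) * V x) := by ring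
        _ ≤ (((k:ℝ)+1)*((k:ℝ)+2)*x^(k-1)) * (((k:ℝ)+1) * x * U x) := by
            apply mul_le_mul_of_nonneg_left key
            positivity
        _ = ((k:ℝ)+1) * (((k:ℝ)+2)*(((k:ℝ)+1)*x^k)) * U x := by rw [hxk]; ring
  have hfa := hmono (Set.self_mem_Ici) (show a ∈ Set.Ici (1:ℝ) from ha) ha
  -- f 1 = (k+1) log (k+1) - (k+2) log k
  have hU1 : U 1 = k := by simp [hU_def]
  have hV1 : V 1 = (k:ℝ)+1 := by simp [hV_def]; ring
  rw [hf_def] at hfa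
  simp only [hU1, hV1] at hfa
  have hUa := hUpos a ha
  have hVa := hVpos a ha
  have hkpos : (0:ℝ) < k := by linarith
  have hlog : ((k:ℝ)+2) * Real.log (U a / k) ≤ ((k:ℝ)+1) * Real.log (V a / ((k:ℝ)+1)) := by
    rw [Real.log_div hUa.ne' hkpos.ne', Real.log_div hVa.ne' (by linarith : ((k:ℝ)+1) ≠ 0)]
    nlinarith [hfa]
  have hLpos : (0:ℝ) < U a / k := div_pos hUa hkpos
  have hRpos : (0:ℝ) < V a / ((k:ℝ)+1) := div_pos hVa (by linarith)
  have hlog2 : Real.log ((U a / ↑k)^(k+2)) ≤ Real.log ((V a / ((k:ℝ)+1))^(k+1)) := by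
    rw [Real.log_pow, Real.log_pow]
    push_cast
    linarith [hlog]
  have hfin := (Real.log_le_log_iff (by positivity) (by positivity)).mp hlog2
  simpa only [hU_def, hV_def] using hfin


lemma monoG (d : ℕ) (hd : 1 ≤ d) {a : ℝ} (ha : 1 ≤ a) (n : ℕ) (hn : d ≤ n) :
    ((((d:ℝ)+1)*a^d - 1)/d) ^ ((1:ℝ)/((d:ℝ)+1))
      ≤ ((((n:ℝ)+1)*a^n - 1)/n) ^ ((1:ℝ)/((n:ℝ)+1)) := by
  induction n, hn using Nat.le_induction with
  | base => exact le_refl _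
  | succ n hdn ih =>
    refine ih.trans ?_
    have hn1 : 1 ≤ n := hd.trans hdn
    have hn1' : (1:ℝ) ≤ n := by exact_mod_cast hn1
    have hu1 : (1:ℝ) ≤ (((n:ℝ)+1)*a^n - 1)/n := by
      rw [le_div_iff₀ (by linarith)]
      have : (1:ℝ) ≤ a ^ n := one_le_pow₀ ha
      nlinarith
    have hv1 : (1:ℝ) ≤ (((n:ℝ)+2)*a^(n+1) - 1)/((n:ℝ)+1) := by
      rw [le_div_iff₀ (by linarith)]
      have : (1:ℝ) ≤ a ^ (n+1) := one_le_pow₀ ha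
      nlinarith
    set u := (((n:ℝ)+1)*a^n - 1)/n
    set v := (((n:ℝ)+2)*a^(n+1) - 1)/((n:ℝ)+1)
    have hu0 : (0:ℝ) ≤ u := by linarith
    have hv0 : (0:ℝ) ≤ v := by linarith
    have hstep : u^(n+2) ≤ v^(n+1) := stepG n hn1 ha
    have h2 := Real.rpow_le_rpow (by positivity) hstep
      (by positivity : (0:ℝ) ≤ 1/(((n:ℝ)+1)*((n:ℝ)+2)))
    rw [← Real.rpow_natCast u (n+2), ← Real.rpow_natCast v (n+1),
      ← Real.rpow_mul hu0, ← Real.rpow_mul hv0] at h2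
    have e1 : ((n:ℝ)+2) * (1/(((n:ℝ)+1)*((n:ℝ)+2))) = 1/((n:ℝ)+1) := by
      field_simp
    have e2 : ((n:ℝ)+1) * (1/(((n:ℝ)+1)*((n:ℝ)+2))) = 1/((n:ℝ)+2) := by
      field_simp
    rw [show ((n+2:ℕ):ℝ) = (n:ℝ)+2 by push_cast; ring,
      show ((n+1:ℕ):ℝ) = (n:ℝ)+1 by push_cast; ring, e1, e2] at h2
    convert h2 using 3 <;> push_cast
    · rfl
    all_goals ring

lemma lemB (dd n : ℕ) (hd : 1 ≤ dd) (hdn : dd ≤ n) {lam : ℝ} (hl : 0 ≤ lam) :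
    (n:ℝ) * ((1 + ((dd:ℝ)+1)*lam) ^ ((1:ℝ)/((dd:ℝ)+1)))^(n+1) + 1
      ≤ ((n:ℝ)+1) * ((1 + (dd:ℝ)*lam) ^ ((1:ℝ)/(dd:ℝ)))^n := by
  have hd1 : (1:ℝ) ≤ dd := by exact_mod_cast hd
  have hn1 : (1:ℝ) ≤ n := by exact_mod_cast hd.trans hdn
  have hA1 : (1:ℝ) ≤ 1 + (dd:ℝ)*lam := by nlinarith
  set a := (1 + (dd:ℝ)*lam) ^ ((1:ℝ)/(dd:ℝ)) with ha_def
  have ha1 : 1 ≤ a := Real.one_le_rpow hA1 (by positivity)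
  have had : a ^ dd = 1 + (dd:ℝ)*lam := by
    rw [ha_def, ← Real.rpow_natCast _ dd, ← Real.rpow_mul (by linarith)]
    rw [show (1:ℝ)/(dd:ℝ) * (dd:ℕ) = 1 by field_simp]
    exact Real.rpow_one _
  have keyeq : 1 + ((dd:ℝ)+1)*lam = (((dd:ℝ)+1)*a^dd - 1)/dd := by
    rw [had]; field_simp; ring
  have hmono := monoG dd hd ha1 n hdn
  rw [← keyeq] at hmono
  -- raise to (n+1)-th power
  have hb0 : (0:ℝ) ≤ (1 + ((dd:ℝ)+1)*lam) ^ ((1:ℝ)/((dd:ℝ)+1)) := by positivity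
  have hpow := pow_le_pow_left₀ hb0 hmono (n+1)
  have hvn : (0:ℝ) ≤ (((n:ℝ)+1)*a^n - 1)/n := by
    have : (1:ℝ) ≤ a ^ n := one_le_pow₀ ha1
    have h2 : (0:ℝ) < n := by linarith
    apply div_nonneg _ h2.le
    nlinarith
  have heval : (((((n:ℝ)+1)*a^n - 1)/n) ^ ((1:ℝ)/((n:ℝ)+1)))^(n+1)
      = (((n:ℝ)+1)*a^n - 1)/n := by
    rw [← Real.rpow_natCast _ (n+1), ← Real.rpow_mul hvn]
    rw [show (1:ℝ)/((n:ℝ)+1) * ((n+1:ℕ):ℝ) = 1 by push_cast; field_simp]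
    exact Real.rpow_one _
  rw [heval] at hpow
  have hn0 : (0:ℝ) < n := by linarith
  calc (n:ℝ) * ((1 + ((dd:ℝ)+1)*lam) ^ ((1:ℝ)/((dd:ℝ)+1)))^(n+1) + 1
      ≤ (n:ℝ) * ((((n:ℝ)+1)*a^n - 1)/n) + 1 := by nlinarith [hpow]
    _ = ((n:ℝ)+1) * a^n := by field_simp; ring


lemma gm_superadd {m : ℕ} (hm : 0 < m) (x : Fin m → ℝ) (hx : ∀ i, 0 ≤ x i) :
    1 + ∏ i, (x i) ^ ((1:ℝ)/(m:ℝ)) ≤ ∏ i, (1 + x i) ^ ((1:ℝ)/(m:ℝ)) := by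
  have hm' : (0:ℝ) < m := by exact_mod_cast hm
  have h1 : ∀ i : Fin m, (0:ℝ) < 1 + x i := fun i => by have := hx i; linarith
  have hw : ∀ i ∈ univ (α := Fin m), (0:ℝ) ≤ 1/(m:ℝ) := fun i _ => by positivity
  have hw' : ∑ _i : Fin m, (1:ℝ)/(m:ℝ) = 1 := by
    rw [Finset.sum_const, card_univ, Fintype.card_fin, nsmul_eq_mul]
    field_simp
  have hA := Real.geom_mean_le_arith_mean_weighted univ (fun _ => 1/(m:ℝ))
    (fun i => x i / (1 + x i)) hw hw'
    (fun i _ => div_nonneg (hx i) (h1 i).le)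
  have hB := Real.geom_mean_le_arith_mean_weighted univ (fun _ => 1/(m:ℝ))
    (fun i => 1 / (1 + x i)) hw hw'
    (fun i _ => div_nonneg zero_le_one (h1 i).le)
  set T := ∏ i, (1 + x i) ^ ((1:ℝ)/(m:ℝ)) with hT_def
  have hT : (0:ℝ) < T :=
    Finset.prod_pos fun i _ => Real.rpow_pos_of_pos (h1 i) _
  have hp1 : (∏ i, (x i / (1 + x i)) ^ ((1:ℝ)/(m:ℝ)))
      = (∏ i, (x i) ^ ((1:ℝ)/(m:ℝ))) / T := by
    rw [hT_def, ← Finset.prod_div_distrib]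
    exact Finset.prod_congr rfl fun i _ => Real.div_rpow (hx i) (h1 i).le _
  have hp2 : (∏ i, ((1:ℝ) / (1 + x i)) ^ ((1:ℝ)/(m:ℝ))) = 1 / T := by
    have e : ∀ i : Fin m, ((1:ℝ)/(1+x i)) ^ ((1:ℝ)/(m:ℝ))
        = 1 / ((1+x i) ^ ((1:ℝ)/(m:ℝ))) := fun i => by
      rw [Real.div_rpow zero_le_one (h1 i).le, Real.one_rpow]
    rw [Finset.prod_congr rfl fun i _ => e i, Finset.prod_div_distrib,
      Finset.prod_const_one, hT_def]
  rw [hp1] at hA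
  rw [hp2] at hB
  have hsum : (∑ i, (1:ℝ)/(m:ℝ) * (x i / (1 + x i)))
      + (∑ i, (1:ℝ)/(m:ℝ) * (1 / (1 + x i))) = 1 := by
    rw [← Finset.sum_add_distrib]
    have : ∀ i : Fin m, (1:ℝ)/(m:ℝ) * (x i / (1 + x i)) + (1:ℝ)/(m:ℝ) * (1 / (1 + x i))
        = 1/(m:ℝ) := by
      intro i
      have := (h1 i).ne'
      field_simp
      ring
    rw [Finset.sum_congr rfl fun i _ => this i]
    exact hw'
  have hc : (∏ i, (x i) ^ ((1:ℝ)/(m:ℝ))) / T + 1 / T ≤ 1 := by linarith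
  rw [← add_div, div_le_one hT] at hc
  linarith

theorem stmt_1 (Δ : ℕ) (hΔ : 1 ≤ Δ) (d : Fin Δ → ℕ)
    (hd : ∀ i, 1 ≤ d i ∧ d i ≤ Δ)
    (lam0 : ℝ) (lam : Fin Δ → ℝ) (h0 : 0 ≤ lam0) (h : ∀ i, 0 ≤ lam i) :
    (∏ i, (1 + (d i : ℝ) * lam i) ^ ((1 : ℝ) / (d i : ℝ))) + lam0
    ≥ (1 + ((Δ : ℝ) + 1) * lam0) ^ ((1 : ℝ) / ((Δ : ℝ) + 1)) *
      ∏ i, (1 + ((d i : ℝ) + 1) * lam i) ^ ((1 : ℝ) / ((d i : ℝ) + 1)) := by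
  have hN1 : (1:ℝ) ≤ (Δ:ℝ) := by exact_mod_cast hΔ
  have hN0 : (0:ℝ) < (Δ:ℝ) := by linarith
  set a : Fin Δ → ℝ := fun i => (1 + (d i : ℝ) * lam i) ^ ((1 : ℝ) / (d i : ℝ)) with ha_def
  set b : Fin Δ → ℝ := fun i => (1 + ((d i : ℝ) + 1) * lam i) ^ ((1 : ℝ) / ((d i : ℝ) + 1))
    with hb_def
  have hd1 : ∀ i, (1:ℝ) ≤ (d i : ℝ) := fun i => by exact_mod_cast (hd i).1
  have ha1 : ∀ i, 1 ≤ a i := fun i =>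
    Real.one_le_rpow (by nlinarith [hd1 i, h i]) (by positivity)
  have hb1 : ∀ i, 1 ≤ b i := fun i =>
    Real.one_le_rpow (by nlinarith [hd1 i, h i]) (by positivity)
  have hb0 : ∀ i, (0:ℝ) ≤ b i := fun i => le_trans zero_le_one (hb1 i)
  have hBi : ∀ i, 1 + (Δ:ℝ) * (b i)^(Δ+1) ≤ ((Δ:ℝ)+1) * (a i)^Δ := by
    intro i
    have := lemB (d i) Δ (hd i).1 (hd i).2 (h i)
    simp only [ha_def, hb_def]
    linarith
  have hx : ∀ i, (0:ℝ) ≤ (Δ:ℝ) * (b i)^(Δ+1) := fun i => mul_nonneg hN0.le (pow_nonneg (hb0 i) _)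
  have hsup := gm_superadd hΔ (fun i => (Δ:ℝ) * (b i)^(Δ+1)) hx
  set P := ∏ i, a i with hP_def
  set Q := ∏ i, b i with hQ_def
  have ha0 : ∀ i, (0:ℝ) ≤ a i := fun i => le_trans zero_le_one (ha1 i)
  have hP1 : 1 ≤ P := by
    rw [hP_def]
    calc (1:ℝ) = ∏ _i : Fin Δ, 1 := by simp
      _ ≤ ∏ i, a i := Finset.prod_le_prod (by simp) (fun i _ => ha1 i)
  have hQ1 : 1 ≤ Q := by
    rw [hQ_def]
    calc (1:ℝ) = ∏ _i : Fin Δ, 1 := by simp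
      _ ≤ ∏ i, b i := Finset.prod_le_prod (by simp) (fun i _ => hb1 i)
  have hQ0 : (0:ℝ) ≤ Q := le_trans zero_le_one hQ1
  set W := Q ^ (((Δ:ℝ)+1)/(Δ:ℝ)) with hW_def
  have hW0 : (0:ℝ) ≤ W := Real.rpow_nonneg hQ0 _
  -- evaluate the superadditivity LHS product
  have hL : ∏ i, ((Δ:ℝ)*(b i)^(Δ+1)) ^ ((1:ℝ)/(Δ:ℝ)) = (Δ:ℝ) * W := by
    rw [Real.finset_prod_rpow univ _ (fun i _ => hx i) _]
    rw [Finset.prod_mul_distrib, Finset.prod_const, card_univ, Fintype.card_fin,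
      Finset.prod_pow]
    rw [Real.mul_rpow (by positivity) (pow_nonneg (Finset.prod_nonneg fun i _ => hb0 i) _)]
    congr 1
    · rw [← Real.rpow_natCast ((Δ:ℝ)) Δ, ← Real.rpow_mul hN0.le]
      rw [show ((Δ:ℕ):ℝ)*((1:ℝ)/(Δ:ℝ)) = 1 by field_simp]
      exact Real.rpow_one _
    · rw [hW_def, hQ_def, ← Real.rpow_natCast (∏ i, b i) (Δ+1),
        ← Real.rpow_mul (Finset.prod_nonneg fun i _ => hb0 i)]
      congr 1
      push_cast
      ring
  have hR : ∏ i, (((Δ:ℝ)+1)*(a i)^Δ) ^ ((1:ℝ)/(Δ:ℝ)) = ((Δ:ℝ)+1) * P := by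
    rw [Real.finset_prod_rpow univ _
      (fun i _ => mul_nonneg (by positivity) (pow_nonneg (ha0 i) _)) _]
    rw [Finset.prod_mul_distrib, Finset.prod_const, card_univ, Fintype.card_fin,
      Finset.prod_pow, ← mul_pow]
    rw [← Real.rpow_natCast (((Δ:ℝ)+1) * ∏ i, a i) Δ,
      ← Real.rpow_mul (mul_nonneg (by positivity) (Finset.prod_nonneg fun i _ => ha0 i))]
    rw [show ((Δ:ℕ):ℝ)*((1:ℝ)/(Δ:ℝ)) = 1 by field_simp]
    exact Real.rpow_one _
  have hmid : ∏ i, (1 + (Δ:ℝ)*(b i)^(Δ+1)) ^ ((1:ℝ)/(Δ:ℝ))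
      ≤ ∏ i, (((Δ:ℝ)+1)*(a i)^Δ) ^ ((1:ℝ)/(Δ:ℝ)) :=
    Finset.prod_le_prod (fun i _ => Real.rpow_nonneg (by nlinarith [hx i]) _)
      (fun i _ => Real.rpow_le_rpow (by nlinarith [hx i]) (hBi i) (by positivity))
  have key4 : 1 + (Δ:ℝ) * W ≤ ((Δ:ℝ)+1) * P := by
    rw [← hL, ← hR]
    exact hsup.trans hmid
  -- step 5 : weighted AM-GM on two terms
  have hgm2 := Real.geom_mean_le_arith_mean2_weighted
    (by positivity : (0:ℝ) ≤ 1/((Δ:ℝ)+1))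
    (by positivity : (0:ℝ) ≤ (Δ:ℝ)/((Δ:ℝ)+1))
    (by nlinarith : (0:ℝ) ≤ 1 + ((Δ:ℝ)+1)*lam0)
    hW0
    (by field_simp; ring : 1/((Δ:ℝ)+1) + (Δ:ℝ)/((Δ:ℝ)+1) = 1)
  have hWQ : W ^ ((Δ:ℝ)/((Δ:ℝ)+1)) = Q := by
    rw [hW_def, ← Real.rpow_mul hQ0]
    rw [show (((Δ:ℝ)+1)/(Δ:ℝ)) * ((Δ:ℝ)/((Δ:ℝ)+1)) = 1 by field_simp]
    exact Real.rpow_one _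
  rw [hWQ] at hgm2
  have hNp : (0:ℝ) < (Δ:ℝ)+1 := by linarith
  have hdiv : (1 + (Δ:ℝ)*W)/((Δ:ℝ)+1) ≤ P := by
    rw [div_le_iff₀ hNp]
    linarith
  have hid : (1/((Δ:ℝ)+1))*(1+((Δ:ℝ)+1)*lam0) + ((Δ:ℝ)/((Δ:ℝ)+1))*W
      = lam0 + (1+(Δ:ℝ)*W)/((Δ:ℝ)+1) := by
    field_simp
    ring
  rw [ge_iff_le]
  calc (1 + ((Δ:ℝ)+1)*lam0) ^ ((1:ℝ)/((Δ:ℝ)+1)) * Q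
      ≤ (1/((Δ:ℝ)+1))*(1+((Δ:ℝ)+1)*lam0) + ((Δ:ℝ)/((Δ:ℝ)+1))*W := hgm2
    _ = lam0 + (1+(Δ:ℝ)*W)/((Δ:ℝ)+1) := hid
    _ ≤ lam0 + P := by linarith [hdiv]
    _ = P + lam0 := by ring
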